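/- Let ℓ_1, …, ℓ_m : ℝ^n → ℝ be continuously differentiable and bounded below, with ℓ_i* = inf_{θ ∈ ℝ^n} ℓ_i(θ) > −∞ for each i. Define g(θ) = min_{ω ∈ Δ^m} ‖Σ_{i=1}^m ω_i ∇ℓ_i(θ)‖², where Δ^m is the probability simplex in ℝ^m. Let θ : [0, ∞) → ℝ^n be differentiable, let α : [0, ∞) → [0, ∞) be locally integrable, and suppose that for every s ∈ [0, t] and every i ∈ [m], (d/ds) ℓ_i(θ(s)) ≤ −α(s) g(θ(s)). Then (inf_{s ∈ [0,t]} g(θ(s))) · ∫_0^t α(s) ds ≤ min_{i ∈ [m]} (ℓ_i(θ(0)) − ℓ_i*). -/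

import Mathlib

/-- part (ii) of Theorem 2: along a trajectory with
`(d/ds) ℓᵢ(θ(s)) ≤ -α(s) g(θ(s))` on `[0,t]`, the best Pareto stationarity
measure satisfies `(inf_{s∈[0,t]} g(θ s)) ∫₀ᵗ α ≤ min_i (ℓᵢ(θ 0) - ℓᵢ*)`. -/
theorem stmt_5 {n m : ℕ} (hm : 0 < m)
    (ℓ : Fin m → EuclideanSpace ℝ (Fin n) → ℝ)
    (hC1 : ∀ i, ContDiff ℝ 1 (ℓ i))
    (hbdd : ∀ i, BddBelow (Set.range (ℓ i)))
    (g : EuclideanSpace ℝ (Fin n) → ℝ)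
    (hg : ∀ x, g x = sInf {r : ℝ | ∃ ω : Fin m → ℝ,
      (∀ i, 0 ≤ ω i) ∧ (∑ i, ω i = 1) ∧ r = ‖∑ i, ω i • gradient (ℓ i) x‖ ^ 2})
    (θ : ℝ → EuclideanSpace ℝ (Fin n)) (hθ : Differentiable ℝ θ)
    (α : ℝ → ℝ) (hα0 : ∀ s, 0 ≤ α s)
    (t : ℝ) (ht : 0 ≤ t)
    (hαint : IntervalIntegrable α MeasureTheory.volume 0 t)
    (hderiv : ∀ i, ∀ s ∈ Set.Icc (0 : ℝ) t,
      deriv (fun u => ℓ i (θ u)) s ≤ -(α s * g (θ s))) :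
    (⨅ s : Set.Icc (0 : ℝ) t, g (θ ↑s)) * (∫ s in (0 : ℝ)..t, α s) ≤
      ⨅ i, (ℓ i (θ 0) - ⨅ x, ℓ i x) := by
  haveI : Nonempty (Fin m) := Fin.pos_iff_nonempty.mp hm
  -- g is nonnegative everywhere
  have hg0 : ∀ x, 0 ≤ g x := by
    intro x
    rw [hg x]
    apply Real.sInf_nonneg
    rintro r ⟨ω, -, -, rfl⟩
    positivity
  set G : ℝ := ⨅ s : Set.Icc (0 : ℝ) t, g (θ ↑s) with hG
  have hGbdd : BddBelow (Set.range fun s : Set.Icc (0 : ℝ) t => g (θ ↑s)) :=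
    ⟨0, by rintro r ⟨s, rfl⟩; exact hg0 _⟩
  have hGle : ∀ s ∈ Set.Icc (0 : ℝ) t, G ≤ g (θ s) := fun s hs =>
    ciInf_le hGbdd (⟨s, hs⟩ : Set.Icc (0 : ℝ) t)
  -- integrability of the comparison function
  have hφint : MeasureTheory.IntegrableOn (fun u => (-G) * α u)
      (Set.Icc (0 : ℝ) t) MeasureTheory.volume := by
    have h1 : MeasureTheory.IntegrableOn α (Set.Icc (0 : ℝ) t) MeasureTheory.volume := by
      rw [integrableOn_Icc_iff_integrableOn_Ioc]
      simpa [Set.uIoc_of_le ht] using hαint.1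
    exact h1.const_mul _
  have key : ∀ i, G * (∫ s in (0 : ℝ)..t, α s) ≤ ℓ i (θ 0) - ⨅ x, ℓ i x := by
    intro i
    have hfd : Differentiable ℝ fun u => ℓ i (θ u) :=
      ((hC1 i).differentiable one_ne_zero).comp hθ
    have hsub : ℓ i (θ t) - ℓ i (θ 0) ≤ ∫ u in (0 : ℝ)..t, (-G) * α u := by
      apply intervalIntegral.sub_le_integral_of_hasDeriv_right_of_le ht
        (hfd.continuous.continuousOn)
        (fun x _ => ((hfd x).hasDerivAt).hasDerivWithinAt) hφint
      intro x hx
      have h1 := hderiv i x (Set.mem_Icc_of_Ioo hx)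
      have h2 : α x * G ≤ α x * g (θ x) :=
        mul_le_mul_of_nonneg_left (hGle x (Set.mem_Icc_of_Ioo hx)) (hα0 x)
      nlinarith
    rw [intervalIntegral.integral_const_mul] at hsub
    have hinf : (⨅ x, ℓ i x) ≤ ℓ i (θ t) := ciInf_le (hbdd i) (θ t)
    nlinarith
  exact le_ciInf key
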